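/- Let Γ be the n × n upper triangular all-ones matrix (Γᵢⱼ = 1 for i ≤ j, else 0) and for k ∈ ℤ define m_{k,j} = Σᵢ (Γᵏ)ᵢⱼ (column sums of powers of Γ). Then for all k ≥ 1 and 1 ≤ j ≤ n: m_{−k,j} = (−1)^{j−1} C(k−1, j−1), and for all k ≥ 0: m_{k,j} = C(j+k−1, k). -/
import Mathlib

open Finset

private def gAux : ℕ → ℕ → ℤ
  | 0, _ => 1
  | (k+1), j => (-1 : ℤ) ^ j * ((Nat.choose k j : ℕ) : ℤ)

private lemma gAux_claimA (k : ℕ) (j : ℕ) :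
    ∑ t ∈ Finset.range (j+1), gAux (k+1) t = gAux k j := by
  induction j with
  | zero => cases k <;> simp [gAux]
  | succ j ih =>
      rw [Finset.sum_range_succ, ih]
      cases k with
      | zero => simp [gAux, Nat.choose_eq_zero_of_lt]
      | succ k' =>
          simp only [gAux, Nat.choose_succ_succ]
          push_cast
          ring

private lemma hockey (k j : ℕ) :
    ∑ t ∈ Finset.range (j+1), Nat.choose (t+k) k = Nat.choose (j+k+1) (k+1) := by
  induction j with
  | zero => simp
  | succ j ih =>
      rw [Finset.sum_range_succ, ih, show j + 1 + k + 1 = (j + k + 1) + 1 by ring,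
        Nat.choose_succ_succ' (j+k+1) k, show j + 1 + k = j + k + 1 by ring]
      omega

/-- let `Γ` be the `n × n` upper triangular all-ones integer matrix and
`m k j = ∑ᵢ (Γ^k)ᵢⱼ` the column sums of its integer powers (vertices/indices are
`1`-based in the paper, `0`-based here via `Fin n`). Then for all `k ≥ 1` and all `j`,
`m (-k) j = (-1)^(j-1) * C(k-1, j-1)`, and for all `k ≥ 0`, `m k j = C(j+k-1, k)`. -/
theorem stmt_9 {n : ℕ} (Γ : Matrix (Fin n) (Fin n) ℤ)
    (hΓ : ∀ i j : Fin n, Γ i j = if i ≤ j then 1 else 0)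
    (m : ℤ → Fin n → ℤ)
    (hm : ∀ (k : ℤ) (j : Fin n), m k j = ∑ i : Fin n, (Γ ^ k) i j) :
    (∀ k : ℕ, 1 ≤ k → ∀ j : Fin n,
        m (-(k : ℤ)) j = (-1 : ℤ) ^ (j : ℕ) * ((k - 1).choose (j : ℕ) : ℤ)) ∧
      (∀ k : ℕ, ∀ j : Fin n,
        m (k : ℤ) j = (((j : ℕ) + k).choose k : ℤ)) := by
  have hdet : IsUnit Γ.det := by
    have ht : Γ.BlockTriangular id := by
      intro i j hij
      rw [hΓ]
      exact if_neg (not_le.mpr hij)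
    rw [Matrix.det_of_upperTriangular ht]
    simp [hΓ]
  have key : ∀ (k : ℤ) (j : Fin n),
      m (k+1) j = ∑ l : Fin n, if l ≤ j then m k l else 0 := by
    intro k j
    rw [hm, Matrix.zpow_add_one hdet]
    simp only [Matrix.mul_apply]
    rw [Finset.sum_comm]
    refine Finset.sum_congr rfl fun l _ => ?_
    rw [← Finset.sum_mul, hΓ]
    by_cases h : l ≤ j
    · rw [if_pos h, if_pos h, mul_one, hm]
    · rw [if_neg h, if_neg h, mul_zero]
  have key2 : ∀ (k : ℤ) (j : Fin n),
      m (k+1) j = (∑ l : Fin n, if l < j then m k l else 0) + m k j := by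
    intro k j
    rw [key k j]
    have hsplit : ∀ l : Fin n, (if l ≤ j then m k l else 0)
        = (if l < j then m k l else 0) + (if l = j then m k l else 0) := by
      intro l
      rcases lt_trichotomy l j with h | h | h
      · simp [h, le_of_lt h, ne_of_lt h]
      · simp [h]
      · simp [not_le.mpr h, not_lt.mpr (le_of_lt h), ne_of_gt h]
    simp_rw [hsplit, Finset.sum_add_distrib]
    rw [Finset.sum_ite_eq' Finset.univ j (m k), if_pos (Finset.mem_univ j)]
  have convlt : ∀ (f : ℕ → ℤ) (j : Fin n),
      (∑ l : Fin n, if l < j then f (l:ℕ) else 0) = ∑ t ∈ Finset.range (j:ℕ), f t := by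
    intro f j
    simp only [Fin.lt_def]
    rw [Fin.sum_univ_eq_sum_range (fun t => if t < (j:ℕ) then f t else 0) n]
    rw [← Finset.sum_subset (Finset.range_subset_range.mpr j.isLt.le)
        (fun x _ hx => if_neg (by simpa using hx))]
    exact Finset.sum_congr rfl fun x hx => if_pos (Finset.mem_range.mp hx)
  have convle : ∀ (f : ℕ → ℤ) (j : Fin n),
      (∑ l : Fin n, if l ≤ j then f (l:ℕ) else 0) = ∑ t ∈ Finset.range ((j:ℕ)+1), f t := by
    intro f j
    simp only [Fin.le_def]
    rw [Fin.sum_univ_eq_sum_range (fun t => if t ≤ (j:ℕ) then f t else 0) n]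
    rw [← Finset.sum_subset (Finset.range_subset_range.mpr j.isLt)
        (fun x _ hx => if_neg (by simpa [Nat.lt_succ_iff] using hx))]
    exact Finset.sum_congr rfl fun x hx => if_pos (Nat.lt_succ_iff.mp (Finset.mem_range.mp hx))
  have base0 : ∀ j : Fin n, m 0 j = 1 := by
    intro j
    rw [hm]
    simp [Matrix.one_apply]
  have pos : ∀ (k : ℕ) (j : Fin n), m (k:ℤ) j = (((j:ℕ) + k).choose k : ℤ) := by
    intro k
    induction k with
    | zero => intro j; simpa using base0 j
    | succ k ih =>
        intro j
        rw [show ((k+1 : ℕ) : ℤ) = (k:ℤ) + 1 by push_cast; ring, key (k:ℤ) j]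
        have h1 : (∑ l : Fin n, if l ≤ j then m (k:ℤ) l else 0)
            = ∑ l : Fin n, if l ≤ j then ((((l:ℕ) + k).choose k : ℕ) : ℤ) else 0 :=
          Finset.sum_congr rfl fun l _ => by rw [ih l]
        rw [h1, convle (fun t => (((t + k).choose k : ℕ) : ℤ)) j, ← Nat.cast_sum]
        exact_mod_cast congrArg (Nat.cast : ℕ → ℤ) (hockey k (j:ℕ))
  have neg : ∀ (k : ℕ) (j : Fin n), m (-(k:ℤ)) j = gAux k (j:ℕ) := by
    intro k
    induction k with
    | zero => intro j; simpa [gAux] using base0 j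
    | succ k ih =>
        have main : ∀ t : ℕ, ∀ j : Fin n, (j:ℕ) = t →
            m (-((k:ℤ)+1)) j = gAux (k+1) (j:ℕ) := by
          intro t
          induction t using Nat.strong_induction_on with
          | _ t iht =>
            intro j hjt
            have hK : m (-(k:ℤ)) j
                = (∑ l : Fin n, if l < j then m (-((k:ℤ)+1)) l else 0) + m (-((k:ℤ)+1)) j := by
              have h := key2 (-((k:ℤ)+1)) j
              rwa [show -((k:ℤ)+1) + 1 = -(k:ℤ) by ring] at h
            have hS : (∑ l : Fin n, if l < j then m (-((k:ℤ)+1)) l else 0)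
                = ∑ s ∈ Finset.range (j:ℕ), gAux (k+1) s := by
              rw [← convlt (fun s => gAux (k+1) s) j]
              refine Finset.sum_congr rfl fun l _ => ?_
              by_cases h : l < j
              · rw [if_pos h, if_pos h]
                exact iht (l:ℕ) (hjt ▸ (Fin.lt_def.mp h)) l rfl
              · rw [if_neg h, if_neg h]
            have hA := gAux_claimA k (j:ℕ)
            rw [Finset.sum_range_succ] at hA
            rw [ih j, hS] at hK
            linarith [hK, hA]
        intro j
        rw [show (-(((k+1) : ℕ):ℤ)) = -((k:ℤ)+1) by push_cast; ring]
        exact main (j:ℕ) j rfl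
  refine ⟨?_, pos⟩
  intro k hk j
  obtain ⟨k', rfl⟩ : ∃ k', k = k' + 1 := ⟨k - 1, (Nat.succ_pred_eq_of_pos hk).symm⟩
  rw [neg (k'+1) j]
  simp [gAux]
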